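/- Let $E \subset \mathbb{R}^d$ be a connected set with cardinality greater than $1$. Let $F \subset \mathbb{R}^d$ be a compact set such that the complement $F^c = \mathbb{R}^d \setminus F$ has at least one bounded connected component. Then the arithmetic sum $E + F = \{x + y : x \in E, y \in F\}$ has non-empty interior. -/

import Mathlib

open Pointwise Metric

/-- Let `E ⊂ ℝ^d` be a connected set with cardinality greater than 1, and `F ⊂ ℝ^d` a
compact set whose complement has at least one bounded connected component. Then the
arithmetic sum `E + F` has non-empty interior. -/
theorem sum_connected_compact_bounded_component_nonempty_interior
    (d : ℕ) (E F : Set (EuclideanSpace ℝ (Fin d)))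
    (hEconn : IsConnected E) (hEcard : E.Nontrivial)
    (hFcpt : IsCompact F)
    (hcomp : ∃ x ∈ Fᶜ, Bornology.IsBounded (connectedComponentIn Fᶜ x)) :
    (interior (E + F)).Nonempty := by
  obtain ⟨x, hxF, hUbdd⟩ := hcomp
  set U : Set (EuclideanSpace ℝ (Fin d)) := connectedComponentIn Fᶜ x with hU
  have hFopen : IsOpen Fᶜ := hFcpt.isClosed.isOpen_compl
  have hUopen : IsOpen U := hFopen.connectedComponentIn
  have hxU : x ∈ U := mem_connectedComponentIn hxF
  have hUsub : U ⊆ Fᶜ := connectedComponentIn_subset _ _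
  obtain ⟨x₀, hx₀, x₁, hx₁, hne⟩ := hEcard
  set v := x₀ - x₁ with hv
  have hvne : v ≠ 0 := sub_ne_zero.mpr hne
  have hvpos : (0:ℝ) < ‖v‖ := norm_pos_iff.mpr hvne
  set f : EuclideanSpace ℝ (Fin d) → ℝ := fun q => inner ℝ v q with hf
  obtain ⟨R, hR⟩ : ∃ R, ∀ q ∈ U, ‖q‖ ≤ R := by
    obtain ⟨R, hR⟩ := hUbdd.exists_norm_le
    exact ⟨R, hR⟩
  have hbdd : BddAbove (f '' U) := by
    refine ⟨‖v‖ * R, ?_⟩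
    rintro _ ⟨q, hq, rfl⟩
    calc f q ≤ ‖v‖ * ‖q‖ := real_inner_le_norm v q
    _ ≤ ‖v‖ * R := by nlinarith [hR q hq, norm_nonneg q]
  set s := sSup (f '' U) with hs
  have hfle : ∀ q ∈ U, f q ≤ s := fun q hq => le_csSup hbdd ⟨q, hq, rfl⟩
  have hvv : (0:ℝ) < ‖v‖^2/2 := by positivity
  obtain ⟨_, ⟨u, huU, rfl⟩, hu⟩ :=
    exists_lt_of_lt_csSup (Set.Nonempty.image f ⟨x, hxU⟩)
      (show s - ‖v‖^2/2 < s by linarith)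
  obtain ⟨ε₀, hε₀, hball⟩ := Metric.isOpen_iff.mp hUopen u huU
  set ε := min ε₀ (‖v‖/2) with hε
  have hεpos : 0 < ε := lt_min hε₀ (by positivity)
  refine ⟨x₀ + u, ?_⟩
  rw [mem_interior]
  refine ⟨ball (x₀ + u) ε, ?_, isOpen_ball, mem_ball_self hεpos⟩
  intro p hp
  by_contra hpEF
  have hdist : ‖p - x₀ - u‖ < ε := by
    have : ‖p - x₀ - u‖ = dist p (x₀ + u) := by
      rw [dist_eq_norm]; congr 1; abel
    rw [this]; exact mem_ball.mp hp
  have hq : p - x₀ ∈ U := by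
    apply hball
    rw [mem_ball, dist_eq_norm]
    exact lt_of_lt_of_le hdist (min_le_left _ _)
  have hPE : ∀ y ∈ E, p - y ∈ Fᶜ := by
    intro y hy hmem
    exact hpEF ⟨y, hy, p - y, hmem, by module⟩
  have hconn : IsPreconnected ((fun y => p - y) '' E) :=
    hEconn.isPreconnected.image _ (Continuous.continuousOn (by continuity))
  have hsub : (fun y => p - y) '' E ⊆ U := by
    have hmem0 : p - x₀ ∈ (fun y => p - y) '' E := ⟨x₀, hx₀, rfl⟩
    have h1 := hconn.subset_connectedComponentIn hmem0
      (by rintro _ ⟨y, hy, rfl⟩; exact hPE y hy)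
    have heq : connectedComponentIn Fᶜ (p - x₀) = U := (connectedComponentIn_eq hq).symm
    rwa [heq] at h1
  have hq1 : p - x₁ ∈ U := hsub ⟨x₁, hx₁, rfl⟩
  have hclose : |f (p - x₀) - f u| ≤ ‖v‖ * ‖p - x₀ - u‖ := by
    have : f (p - x₀) - f u = inner ℝ v (p - x₀ - u) := by
      rw [hf]; simp only; rw [← inner_sub_right]
    rw [this]
    exact abs_real_inner_le_norm _ _
  have h1 : s - ‖v‖^2 < f (p - x₀) := by
    have hεle : ‖v‖ * ‖p - x₀ - u‖ < ‖v‖^2/2 := by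
      have : ‖p - x₀ - u‖ < ‖v‖/2 := lt_of_lt_of_le hdist (min_le_right _ _)
      nlinarith
    have := abs_le.mp hclose
    linarith [this.1]
  have h2 : f (p - x₁) = f (p - x₀) + ‖v‖^2 := by
    have hpx : p - x₁ = (p - x₀) + v := by rw [hv]; abel
    rw [hf]; simp only; rw [hpx, inner_add_right, real_inner_self_eq_norm_sq]
  have h3 := hfle _ hq1
  linarith
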